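/- arXiv:1402.4981 — 3 statements merged into one kernel-verified Lean document; each statement's English description precedes it below -/
import Mathlib

section
/- Let p be a prime and G a finite group with Sylow p-subgroup S. Assume that O_{p'}(G) = 1 (i.e., the only normal subgroup of G of order coprime to p is the trivial subgroup) and that G is p-constrained (i.e., there exists a normal p-subgroup Q of G with C_G(Q) ≤ Q). Let C := {φ ∈ Aut(G) | φ(s) = s for all s ∈ S} be the group of automorphisms of G restricting to the identity on S. Then C has a normal p-complement: there exists a normal subgroup N of C such that p does not divide the order of N and the quotient C/N is a p-group. -/
/-- The subgroup of automorphisms of `G` fixing every element of the set `s` pointwise. -/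
def fixingAut (G : Type*) [Group G] (s : Set G) : Subgroup (MulAut G) where
  carrier := {φ | ∀ x ∈ s, φ x = x}
  one_mem' := fun x _ => rfl
  mul_mem' := by
    intro a b ha hb x hx
    have : (a * b) x = a (b x) := rfl
    rw [this, hb x hx, ha x hx]
  inv_mem' := by
    intro a ha x hx
    conv_lhs => rw [← ha x hx]
    exact MulAut.inv_apply_self _ a x

/-- A group `G` (with `O_{p'}(G) = 1`) is `p`-constrained if it has a normal
`G`-centric `p`-subgroup. -/
def PConstrained (p : ℕ) (G : Type*) [Group G] : Prop :=
  ∃ Q : Subgroup G, Q.Normal ∧ IsPGroup p Q ∧ Subgroup.centralizer (Q : Set G) ≤ Q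

/-- A group `C` has a normal `p`-complement if there is a normal subgroup `N` of `C` of order
not divisible by `p` such that `C ⧸ N` is a `p`-group. -/
def HasNormalPComplement (p : ℕ) (C : Type*) [Group C] : Prop :=
  ∃ (N : Subgroup C) (hN : N.Normal), ¬ (p ∣ Nat.card N) ∧
    @IsPGroup p (C ⧸ N) (@QuotientGroup.Quotient.group C _ N hN)

/-- Gross: if `G` is `p`-constrained with `O_{p'}(G) = 1` and `S` is a Sylow `p`-subgroup of
`G`, then the group of automorphisms of `G` restricting to the identity on `S` has a normal
`p`-complement. -/
theorem gross_normal_p_complement (p : ℕ) [Fact p.Prime] (G : Type*) [Group G] [Finite G]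
    (S : Sylow p G)
    (hOp' : ∀ N : Subgroup G, N.Normal → (Nat.card N).Coprime p → N = ⊥)
    (hconstr : PConstrained p G) :
    HasNormalPComplement p (fixingAut G ((S : Subgroup G) : Set G)) := by
  obtain ⟨Q, hQnorm, hQp, hQcent⟩ := hconstr
  -- Q ≤ S since Q is a normal p-subgroup
  have hQS : Q ≤ (S : Subgroup G) := by
    have hsup : IsPGroup p (Q ⊔ (S : Subgroup G) : Subgroup G) :=
      haveI := hQnorm
      IsPGroup.to_sup_of_normal_left hQp S.isPGroup'
    have heq : Q ⊔ (S : Subgroup G) = (S : Subgroup G) :=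
      S.3 hsup le_sup_right
    exact heq ▸ le_sup_left
  -- Q has p-power cardinality
  obtain ⟨n, hn⟩ := hQp.exists_card_eq
  -- the fixing group is a p-group
  have hPC : IsPGroup p (fixingAut G ((S : Subgroup G) : Set G)) := by
    intro φ
    refine ⟨n, ?_⟩
    obtain ⟨φ, hφ⟩ := φ
    ext : 1
    push_cast
    apply MulEquiv.ext
    intro g
    -- φ fixes Q pointwise
    have hfixQ : ∀ q ∈ Q, φ q = q := fun q hq => hφ q (hQS hq)
    -- g⁻¹ * φ g centralizes Q
    have hc : g⁻¹ * φ g ∈ Subgroup.centralizer (Q : Set G) := by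
      rw [Subgroup.mem_centralizer_iff]
      intro q hq
      have h1 : φ (g * q * g⁻¹) = g * q * g⁻¹ :=
        hfixQ _ (hQnorm.conj_mem q hq g)
      have h2 : φ (g * q * g⁻¹) = φ g * q * (φ g)⁻¹ := by
        simp only [map_mul, map_inv, hfixQ q hq]
      rw [h2] at h1
      calc q * (g⁻¹ * φ g) = g⁻¹ * (g * q * g⁻¹) * φ g := by group
        _ = g⁻¹ * (φ g * q * (φ g)⁻¹) * φ g := by rw [h1]
        _ = g⁻¹ * φ g * q := by group
    have hcQ : g⁻¹ * φ g ∈ Q := hQcent hc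
    set c := g⁻¹ * φ g with hcdef
    -- iterate: φ^m g = g * c^m
    have hiter : ∀ m : ℕ, (φ ^ m) g = g * c ^ m := by
      intro m
      induction m with
      | zero => simp
      | succ k ih =>
        have : φ ^ (k + 1) = φ ^ k * φ := by rw [pow_succ]
        rw [this]
        have happ : (φ ^ k * φ) g = (φ ^ k) (φ g) := rfl
        have hφg : φ g = g * c := by rw [hcdef]; group
        have hfixc : ∀ m : ℕ, (φ ^ m) c = c := by
          intro m
          induction m with
          | zero => rfl
          | succ j ihj =>
            rw [pow_succ]
            have : (φ ^ j * φ) c = (φ ^ j) (φ c) := rfl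
            rw [this, hfixQ c hcQ, ihj]
        rw [happ, hφg, map_mul, ih, hfixc, mul_assoc, ← pow_succ]
    -- c has order dividing p^n
    have hcpow : c ^ p ^ n = 1 := by
      have := pow_card_eq_one' (G := Q) (x := ⟨c, hcQ⟩)
      rw [hn] at this
      have := congrArg (Subgroup.subtype Q) this
      push_cast at this
      simpa using this
    rw [hiter, hcpow, mul_one]
    rfl
  refine ⟨⊥, inferInstance, ?_, ?_⟩
  · intro hdvd
    have h1 : Nat.card (⊥ : Subgroup (fixingAut G ((S : Subgroup G) : Set G))) = 1 := by
      simp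
    rw [h1] at hdvd
    exact (Fact.out : p.Prime).ne_one (Nat.dvd_one.mp hdvd)
  · exact hPC.to_quotient ⊥
end

section
/- Let p be a prime, G a finite group, H a normal subgroup of G, S a Sylow p-subgroup of G, and T := S ∩ H (which is then a Sylow p-subgroup of H). Assume O_{p'}(G) = 1 (every normal subgroup of G of order coprime to p is trivial), and assume both G and H are p-constrained (each contains a normal p-subgroup that is centric in it). Then O^p(C_G(T)) ∩ S ≤ C_G(H), where O^p(K) denotes the smallest normal subgroup of K whose quotient is a p-group, i.e., the intersection of all normal subgroups N of K with K/N a p-group. -/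
/-- `O^p(K)`: the smallest normal subgroup of `K` with `p`-group quotient, i.e. the
intersection of all normal subgroups `N ⊴ K` such that `K ⧸ N` is a `p`-group. -/
def pResidual (p : ℕ) (K : Type*) [Group K] : Subgroup K :=
  ⨅ (N : Subgroup K) (hN : N.Normal) (_ : @IsPGroup p (K ⧸ N) (@QuotientGroup.Quotient.group K _ N hN)), N

open Subgroup

section Helpers

variable {G : Type*} [Group G]

/-- The centralizer of a normal subgroup is normal. -/
private lemma centralizer_normal_of_normal (H : Subgroup G) (hHn : H.Normal) :
    (Subgroup.centralizer (H : Set G)).Normal := by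
  constructor
  intro x hx g
  rw [Subgroup.mem_centralizer_iff] at hx ⊢
  intro h hh
  have h1 : g⁻¹ * h * g ∈ H := by simpa using hHn.conj_mem h hh g⁻¹
  have h2 := hx _ h1
  have h3 := congrArg (fun y => g * y * g⁻¹) h2
  simpa [mul_assoc] using h3

private lemma subgroup_eq_of_le_of_card_le [Finite G] {A B : Subgroup G}
    (h : A ≤ B) (hc : Nat.card B ≤ Nat.card A) : A = B := by
  apply SetLike.coe_injective
  refine Set.eq_of_subset_of_ncard_le h ?_ (Set.toFinite _)
  rwa [← Nat.card_coe_set_eq, ← Nat.card_coe_set_eq]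

end Helpers

/-- **Key Lemma.** Let `Q ⊴ H ⊴ G` with `Q` a `p`-group that is self-centralizing in `H`
(`C_H(Q) ≤ Q`).  If `c ∈ G` is a `p'`-element centralizing `Q`, then `c` centralizes `H`.

Proof sketch: let `K = ⟨c⟩H` and `M = C_K(Q)`.  Then `N := M ∩ H = C_H(Q) = Z(Q)` is a
central (in `M`) `p`-subgroup of `M`, and `M/N` embeds into `K/H`, a cyclic `p'`-group.
By Schur–Zassenhaus, `N` has a complement `E` in `M`; by centrality and coprimality the
`p'`-elements of `M` are exactly the elements of `E`.  For `h ∈ H`, both `c` and `hch⁻¹`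
are `p'`-elements of `M`, hence lie in `E`, and `(hch⁻¹)c⁻¹ ∈ M ∩ H = N`; uniqueness of
the `N·E` factorization forces `hch⁻¹ = c`. -/
private lemma key_lemma {p : ℕ} [Fact p.Prime] {G : Type*} [Group G] [Finite G]
    {H Q : Subgroup G} (hHn : H.Normal) (hQH : Q ≤ H)
    (hQnorm : ∀ h ∈ H, ∀ q ∈ Q, h * q * h⁻¹ ∈ Q)
    (hQp : IsPGroup p Q)
    (hQc : ∀ g ∈ H, (∀ q ∈ Q, Commute g q) → g ∈ Q)
    {c : G} (hc : ∀ q ∈ Q, Commute c q)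
    (hc' : (orderOf c).Coprime p) :
    ∀ h ∈ H, Commute c h := by
  haveI := hHn
  set K : Subgroup G := Subgroup.zpowers c ⊔ H with hK
  set M : Subgroup G := Subgroup.centralizer (Q : Set G) ⊓ K with hMdef
  have hMK : M ≤ K := inf_le_right
  have hMcent : ∀ m ∈ M, ∀ q ∈ Q, Commute m q := by
    intro m hm q hq
    exact (Subgroup.mem_centralizer_iff.mp (Subgroup.mem_inf.mp hm).1 q hq).symm
  set N : Subgroup M := H.subgroupOf M with hNdef
  haveI hNnormal : N.Normal := hHn.subgroupOf M
  -- every element of N lies in Q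
  have hNQ : ∀ n : M, n ∈ N → (n : G) ∈ Q := by
    intro n hn
    exact hQc (n : G) hn (fun q hq => hMcent (n : G) n.2 q hq)
  -- N is a p-group
  have hNp : IsPGroup p N := by
    intro n
    obtain ⟨k, hk⟩ := hQp ⟨((n : M) : G), hNQ (n : M) n.2⟩
    refine ⟨k, ?_⟩
    have h1 : (((n : M) : G)) ^ p ^ k = 1 := by
      simpa [Subtype.ext_iff] using hk
    ext
    simpa [Subtype.ext_iff] using h1
  -- the index of N in M divides the order of c
  have hNidx : N.index ∣ orderOf c := by
    have h1 : H.relIndex M ∣ H.relIndex K := by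
      rw [← relIndex_sup_right M H]
      exact dvd_of_mul_right_eq _
        (relIndex_mul_relIndex H (M ⊔ H) K le_sup_right (sup_le hMK le_sup_right))
    have h2 : H.relIndex K = H.relIndex (Subgroup.zpowers c) := by
      rw [hK, relIndex_sup_right]
    have h3 : H.relIndex (Subgroup.zpowers c) ∣ Nat.card (Subgroup.zpowers c) :=
      Subgroup.index_dvd_card (H.subgroupOf (Subgroup.zpowers c))
    rw [Nat.card_zpowers] at h3
    exact (h1.trans (h2 ▸ h3))
  have hNcop : (Nat.card N).Coprime N.index := by
    obtain ⟨k, hcard⟩ := (IsPGroup.iff_card).mp hNp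
    rw [hcard]
    exact Nat.Coprime.pow_left _ ((Nat.Coprime.coprime_dvd_right hNidx hc'.symm))
  obtain ⟨E, hE⟩ := Subgroup.exists_right_complement'_of_coprime hNcop
  -- every p'-element of M lies in E
  have hEp' : ∀ m : M, (orderOf m).Coprime p → m ∈ E := by
    intro m hm
    obtain ⟨⟨n, e⟩, hprod, -⟩ := hE.existsUnique m
    have hnN : (n : M) ∈ N := n.2
    have heE : (e : M) ∈ E := e.2
    have hnQ : ((n : M) : G) ∈ Q := hNQ (n : M) hnN
    have hcomm : Commute (n : M) (e : M) := by
      have h1 := hMcent ((e : M) : G) (e : M).2 ((n : M) : G) hnQ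
      exact Subtype.ext (by simpa using h1.symm.eq)
    have hnt : (n : M) ^ orderOf m = 1 := by
      have h1 : ((n : M) * (e : M)) ^ orderOf m = 1 := by
        rw [hprod]; exact pow_orderOf_eq_one m
      rw [hcomm.mul_pow] at h1
      have h2 : (n : M) ^ orderOf m = ((e : M) ^ orderOf m)⁻¹ := by
        rw [eq_inv_iff_mul_eq_one]; exact h1
      have hmem : (n : M) ^ orderOf m ∈ N ⊓ E := Subgroup.mem_inf.mpr
        ⟨pow_mem hnN _, h2 ▸ inv_mem (pow_mem heE _)⟩
      rw [hE.disjoint.eq_bot] at hmem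
      exact hmem
    have hnp : ∃ k, (n : M) ^ p ^ k = 1 := by
      obtain ⟨k, hk⟩ := hQp ⟨((n : M) : G), hnQ⟩
      refine ⟨k, ?_⟩
      ext
      simpa [Subtype.ext_iff] using hk
    obtain ⟨k, hk⟩ := hnp
    have hord : orderOf (n : M) ∣ Nat.gcd (orderOf m) (p ^ k) :=
      Nat.dvd_gcd (orderOf_dvd_of_pow_eq_one hnt) (orderOf_dvd_of_pow_eq_one hk)
    have hgcd : Nat.gcd (orderOf m) (p ^ k) = 1 := Nat.Coprime.pow_right _ hm
    rw [hgcd, Nat.dvd_one, orderOf_eq_one_iff] at hord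
    have h5 : m = (e : M) := by rw [← hprod, hord, one_mul]
    rw [h5]; exact heE
  -- c lies in M, with p'-order, hence in E
  have hcM : c ∈ M := Subgroup.mem_inf.mpr
    ⟨Subgroup.mem_centralizer_iff.mpr (fun q hq => (hc q hq).symm),
     SetLike.le_def.mp le_sup_left (Subgroup.mem_zpowers c)⟩
  set cM : M := ⟨c, hcM⟩ with hcMdef
  have hordc : orderOf cM = orderOf c := by
    rw [← orderOf_injective M.subtype M.subtype_injective cM]; rfl
  have hcE : cM ∈ E := hEp' cM (by rwa [hordc])
  -- now take h ∈ H and conjugate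
  intro h hh
  have hhK : h ∈ K := SetLike.le_def.mp le_sup_right hh
  have hxM : h * c * h⁻¹ ∈ M := by
    refine Subgroup.mem_inf.mpr ⟨?_, ?_⟩
    · rw [Subgroup.mem_centralizer_iff]
      intro q hq
      have hq' : h⁻¹ * q * h ∈ Q := by
        have h1 := hQnorm h⁻¹ (inv_mem hh) q hq
        simpa using h1
      have hcq : c * (h⁻¹ * q * h) = (h⁻¹ * q * h) * c := hc _ hq'
      have h2 := congrArg (fun y => h * y * h⁻¹) hcq
      simpa [mul_assoc] using h2.symm
    · exact mul_mem (mul_mem hhK (SetLike.le_def.mp le_sup_left (Subgroup.mem_zpowers c)))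
        (inv_mem hhK)
  set xM : M := ⟨h * c * h⁻¹, hxM⟩ with hxMdef
  have hordx : orderOf xM = orderOf c := by
    rw [← orderOf_injective M.subtype M.subtype_injective xM]
    show orderOf (h * c * h⁻¹) = orderOf c
    have h1 := orderOf_injective (MulAut.conj h).toMonoidHom (MulAut.conj h).injective c
    simpa using h1
  have hxE : xM ∈ E := hEp' xM (by rwa [hordx])
  have hnN : xM * cM⁻¹ ∈ N := by
    show ((xM * cM⁻¹ : M) : G) ∈ H
    have h1 : ((xM * cM⁻¹ : M) : G) = h * (c * h⁻¹ * c⁻¹) := by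
      push_cast [hxMdef, hcMdef]
      group
    rw [h1]
    exact mul_mem hh (by simpa [mul_assoc] using hHn.conj_mem h⁻¹ (inv_mem hh) c)
  obtain ⟨u, -, huniq⟩ := hE.existsUnique xM
  have h1 := huniq ⟨⟨xM * cM⁻¹, hnN⟩, ⟨cM, hcE⟩⟩ (by simp)
  have h2 := huniq ⟨⟨1, one_mem N⟩, ⟨xM, hxE⟩⟩ (by simp)
  have h3 : cM = xM := by
    have h4 := congrArg (fun z => ((z.2 : M) : G)) (h1.trans h2.symm)
    exact Subtype.ext (by simpa using h4)
  have h5 : c = h * c * h⁻¹ := congrArg Subtype.val h3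
  rw [Commute, SemiconjBy]
  conv_lhs => rw [h5]
  group

/-- A normal `p`-subgroup of the normal subgroup `H` of `G` is contained in `S ⊓ H` for
any Sylow `p`-subgroup `S` of `G`. -/
private lemma q_le_t {p : ℕ} [Fact p.Prime] {G : Type*} [Group G] [Finite G]
    {H Q : Subgroup G} (hHn : H.Normal) (S : Sylow p G)
    (hQH : Q ≤ H) (hQnorm : ∀ h ∈ H, ∀ q ∈ Q, h * q * h⁻¹ ∈ Q)
    (hQp : IsPGroup p Q) :
    Q ≤ (S : Subgroup G) ⊓ H := by
  haveI := hHn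
  set T : Subgroup G := (S : Subgroup G) ⊓ H with hTdef
  have hTp : IsPGroup p T := S.isPGroup'.to_le inf_le_left
  have hTnorm : T ≤ Subgroup.normalizer (Q : Set G) := by
    intro t ht
    have htH : t ∈ H := (Subgroup.mem_inf.mp ht).2
    rw [Subgroup.mem_normalizer_iff]
    intro q
    constructor
    · intro hq; exact hQnorm t htH q hq
    · intro hq
      have := hQnorm t⁻¹ (inv_mem htH) _ hq
      simpa [mul_assoc] using this
  have hUp : IsPGroup p ((Q ⊔ T : Subgroup G)) :=
    IsPGroup.to_sup_of_normal_left' hQp hTp hTnorm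
  obtain ⟨S₂, hS₂⟩ := hUp.exists_le_sylow
  obtain ⟨g, hg⟩ := MulAction.exists_smul_eq G S₂ S
  set f : G →* G := (MulAut.conj g).toMonoidHom with hfdef
  have hfinj : Function.Injective f := (MulAut.conj g).injective
  have hHmap : H.map f = H := by
    apply le_antisymm
    · rintro x ⟨y, hy, rfl⟩
      exact hHn.conj_mem y hy g
    · intro x hx
      exact ⟨g⁻¹ * x * g, by simpa using hHn.conj_mem x hx g⁻¹, by simp [hfdef]; group⟩
  have hSmap : (S₂ : Subgroup G).map f = (S : Subgroup G) := by
    rw [← hg]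
    rfl
  have hUle : Q ⊔ T ≤ (S₂ : Subgroup G) ⊓ H := le_inf hS₂ (sup_le hQH inf_le_right)
  have hmaple : (Q ⊔ T).map f ≤ T := by
    have := Subgroup.map_mono (f := f) hUle
    rw [Subgroup.map_inf _ _ _ hfinj, hSmap, hHmap] at this
    exact this
  have hcard : Nat.card (Q ⊔ T : Subgroup G) ≤ Nat.card T := by
    have e : Nat.card ((Q ⊔ T : Subgroup G).map f) = Nat.card (Q ⊔ T : Subgroup G) :=
      Nat.card_congr ((Subgroup.equivMapOfInjective _ _ hfinj).toEquiv.symm)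
    rw [← e]
    exact Subgroup.card_le_of_le hmaple
  have hTU : T = Q ⊔ T := subgroup_eq_of_le_of_card_le le_sup_right hcard
  calc Q ≤ Q ⊔ T := le_sup_left
    _ = T := hTU.symm

/-- If `(G, H)` is a normal pair of `p`-constrained finite groups with Sylow pair `(S, T)`
and `O_{p'}(G) = 1`, then `O^p(C_G(T)) ∩ S ≤ C_G(H)`. -/
theorem pResidual_centralizer_le (p : ℕ) [Fact p.Prime] (G : Type*) [Group G] [Finite G]
    (H : Subgroup G) [H.Normal] (S : Sylow p G)
    (T : Subgroup G) (hT : T = (S : Subgroup G) ⊓ H)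
    (hOp' : ∀ N : Subgroup G, N.Normal → (Nat.card N).Coprime p → N = ⊥)
    (hG : PConstrained p G) (hH : PConstrained p H) :
    Subgroup.map (Subgroup.centralizer (T : Set G)).subtype
        (pResidual p (Subgroup.centralizer (T : Set G))) ⊓ (S : Subgroup G)
      ≤ Subgroup.centralizer (H : Set G) := by
  obtain ⟨Q₀, hQ₀n, hQ₀p, hQ₀c⟩ := hH
  set Q : Subgroup G := Q₀.map H.subtype with hQdef
  have hQH : Q ≤ H := map_subtype_le Q₀
  have hQnorm : ∀ h ∈ H, ∀ q ∈ Q, h * q * h⁻¹ ∈ Q := by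
    rintro h hh q ⟨q₀, hq₀, rfl⟩
    exact ⟨_, hQ₀n.conj_mem q₀ hq₀ ⟨h, hh⟩, rfl⟩
  have hQp : IsPGroup p Q := hQ₀p.map H.subtype
  have hQc : ∀ g ∈ H, (∀ q ∈ Q, Commute g q) → g ∈ Q := by
    intro g hg hcomm
    have hmem : (⟨g, hg⟩ : H) ∈ Subgroup.centralizer (Q₀ : Set H) := by
      rw [Subgroup.mem_centralizer_iff]
      intro q₀ hq₀
      have h1 := hcomm (H.subtype q₀) ⟨q₀, hq₀, rfl⟩
      exact Subtype.ext (by simpa using h1.symm.eq)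
    exact ⟨⟨g, hg⟩, hQ₀c hmem, rfl⟩
  have hQT : Q ≤ T := by
    rw [hT]
    exact q_le_t ‹H.Normal› S hQH hQnorm hQp
  set C : Subgroup G := Subgroup.centralizer (T : Set G) with hCdef
  set Z : Subgroup G := Subgroup.centralizer (H : Set G) with hZdef
  haveI hZn : Z.Normal := centralizer_normal_of_normal H ‹H.Normal›
  set N : Subgroup C := Z.subgroupOf C with hNdef
  haveI hNn : N.Normal := hZn.subgroupOf C
  -- the quotient `C ⧸ N` is a `p`-group: for `c ∈ C`, the `p'`-part of `c` is a
  -- `p'`-element centralizing `Q`, hence centralizes `H` by the key lemma.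
  have hNq : IsPGroup p (C ⧸ N) := by
    intro x
    induction x using QuotientGroup.induction_on with
    | H c =>
      set a : ℕ := (orderOf c).factorization p with hadef
      refine ⟨a, ?_⟩
      have hmk : ((c : C ⧸ N) : C ⧸ N) ^ p ^ a = ((c ^ p ^ a : C) : C ⧸ N) := by
        rw [← QuotientGroup.mk_pow]
      rw [hmk, QuotientGroup.eq_one_iff]
      set y : C := c ^ p ^ a with hydef
      have hn0 : orderOf c ≠ 0 := (orderOf_pos c).ne'
      have hdvd : p ^ a ∣ orderOf c := Nat.ordProj_dvd _ _
      have hordy : orderOf y = orderOf c / p ^ a := by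
        rw [hydef, orderOf_pow_of_dvd (pow_ne_zero _ (Nat.Prime.ne_zero Fact.out)) hdvd]
      have hcop : (orderOf y).Coprime p := by
        rw [hordy]
        have hnd : ¬ p ∣ (orderOf c / p ^ a) := Nat.not_dvd_ordCompl Fact.out hn0
        exact (Nat.coprime_comm.mp ((Nat.Prime.coprime_iff_not_dvd Fact.out).mpr hnd))
      have hyG : (orderOf ((y : G))).Coprime p := by rwa [orderOf_coe]
      have hyc : ∀ q ∈ Q, Commute (y : G) q := by
        intro q hq
        exact (Subgroup.mem_centralizer_iff.mp y.2 q (hQT hq)).symm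
      have hkey := key_lemma ‹H.Normal› hQH hQnorm hQp hQc hyc hyG
      show y ∈ N
      rw [hNdef, Subgroup.mem_subgroupOf]
      exact Subgroup.mem_centralizer_iff.mpr (fun h hh => (hkey h hh).symm)
  have hres : pResidual p C ≤ N := by
    refine iInf_le_of_le N ?_
    refine iInf_le_of_le hNn ?_
    exact iInf_le _ hNq
  intro x hx
  obtain ⟨y, hy, rfl⟩ := (Subgroup.mem_inf.mp hx).1
  exact Subgroup.mem_subgroupOf.mp (hres hy)
end

section
/- Let n ≥ 6, let G be the symmetric group on n letters, H the alternating group on n letters (a normal subgroup of G), p = 2, S a Sylow 2-subgroup of G, and T := S ∩ H. Define C_S(E) := {g ∈ S | g centralizes T, and for every subgroup P ≤ T and every h ∈ H with hPh⁻¹ ≤ T there exists x ∈ C_G(g) such that xpx⁻¹ = hph⁻¹ for all p ∈ P}. Then C_S(E) = C_G(H) ∩ S; in particular, since the centralizer of the alternating group in the symmetric group is trivial for n ≥ 4, C_S(E) is the trivial subgroup. -/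
open Equiv Equiv.Perm Subgroup Pointwise

variable {n : ℕ}

abbrev Gn (n : ℕ) := Equiv.Perm (Fin n)

lemma two_of_card {α : Type*} [DecidableEq α] (s : Finset α) (h : 2 ≤ s.card) :
    ∃ a ∈ s, ∃ b ∈ s, a ≠ b := by
  obtain ⟨a, ha⟩ := Finset.card_pos.mp (show 0 < s.card by omega)
  obtain ⟨b, hb⟩ := Finset.card_pos.mp (show 0 < (s.erase a).card by
    have := Finset.card_erase_of_mem ha; omega)
  exact ⟨a, ha, b, Finset.mem_of_mem_erase hb, fun h => (Finset.ne_of_mem_erase hb) h.symm⟩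

lemma four_of_card {α : Type*} [DecidableEq α] (s : Finset α) (h : 4 ≤ s.card) :
    ∃ a ∈ s, ∃ b ∈ s, ∃ c ∈ s, ∃ d ∈ s,
      a ≠ b ∧ a ≠ c ∧ a ≠ d ∧ b ≠ c ∧ b ≠ d ∧ c ≠ d := by
  obtain ⟨a, ha⟩ := Finset.card_pos.mp (show 0 < s.card by omega)
  have h1 := Finset.card_erase_of_mem ha
  obtain ⟨b, hb⟩ := Finset.card_pos.mp (show 0 < (s.erase a).card by omega)
  have h2 := Finset.card_erase_of_mem hb
  obtain ⟨c, hc⟩ := Finset.card_pos.mp (show 0 < ((s.erase a).erase b).card by omega)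
  have h3 := Finset.card_erase_of_mem hc
  obtain ⟨d, hd⟩ := Finset.card_pos.mp (show 0 < (((s.erase a).erase b).erase c).card by omega)
  have hds := Finset.mem_of_mem_erase (Finset.mem_of_mem_erase (Finset.mem_of_mem_erase hd))
  have hcs := Finset.mem_of_mem_erase (Finset.mem_of_mem_erase hc)
  have hbs := Finset.mem_of_mem_erase hb
  refine ⟨a, ha, b, hbs, c, hcs, d, hds, ?_, ?_, ?_, ?_, ?_, ?_⟩
  · exact fun h => (Finset.ne_of_mem_erase hb) h.symm
  · exact fun h => (Finset.ne_of_mem_erase (Finset.mem_of_mem_erase hc)) h.symm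
  · exact fun h => (Finset.ne_of_mem_erase
      (Finset.mem_of_mem_erase (Finset.mem_of_mem_erase hd))) h.symm
  · exact fun h => (Finset.ne_of_mem_erase hc) h.symm
  · exact fun h => (Finset.ne_of_mem_erase (Finset.mem_of_mem_erase hd)) h.symm
  · exact fun h => (Finset.ne_of_mem_erase hd) h.symm

lemma centralizer_alternating (hn : 6 ≤ n) (g : Perm (Fin n))
    (hg : ∀ h ∈ alternatingGroup (Fin n), h * g = g * h) : g = 1 := by
  by_contra hne
  have : ∃ a, g a ≠ a := by
    by_contra hall
    push_neg at hall
    exact hne (Equiv.ext hall)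
  obtain ⟨a, ha⟩ := this
  set b := g a with hb
  have hcard : 4 ≤ (Finset.univ \ {a, b} : Finset (Fin n)).card := by
    have h1 : ({a, b} : Finset (Fin n)).card ≤ 2 := Finset.card_insert_le _ _ |>.trans (by simp)
    have h2 : (Finset.univ \ {a, b} : Finset (Fin n)).card
        = Finset.univ.card - ({a,b} : Finset (Fin n)).card :=
      Finset.card_sdiff_of_subset (Finset.subset_univ _)
    simp only [Finset.card_univ, Fintype.card_fin] at h2
    omega
  obtain ⟨c, hc, d, hd, hcd⟩ := two_of_card (Finset.univ \ {a, b}) (by omega)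
  simp only [Finset.mem_sdiff, Finset.mem_insert, Finset.mem_singleton, not_or] at hc hd
  obtain ⟨-, hca, hcb⟩ := hc
  obtain ⟨-, hda, hdb⟩ := hd
  have hac : a ≠ c := fun h => hca h.symm
  have had : a ≠ d := fun h => hda h.symm
  set σ : Perm (Fin n) := swap a c * swap a d with hσ
  have hσH : σ ∈ alternatingGroup (Fin n) := by
    simp [hσ, Equiv.Perm.mem_alternatingGroup, Equiv.Perm.sign_swap hac, Equiv.Perm.sign_swap had]
  have hcomm := hg σ hσH
  have key := congrArg (fun f : Perm (Fin n) => f a) hcomm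
  simp only [Equiv.Perm.mul_apply] at key
  have hσa : σ a = d := by
    simp [hσ, Equiv.Perm.mul_apply, Equiv.swap_apply_left,
      Equiv.swap_apply_of_ne_of_ne (fun h => had h.symm) (fun h => hcd h.symm)]
  have hσb : σ b = b := by
    simp [hσ, Equiv.Perm.mul_apply,
      Equiv.swap_apply_of_ne_of_ne (fun h : b = a => ha h) (fun h => hcb h.symm),
      Equiv.swap_apply_of_ne_of_ne (fun h : b = a => ha h) (fun h => hdb h.symm)]
  rw [← hb, hσb, hσa] at key
  exact had (g.injective key.symm).symm

lemma disjoint_swaps {p q r s : Fin n} (hpr : p ≠ r) (hps : p ≠ s) (hqr : q ≠ r) (hqs : q ≠ s) :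
    Perm.Disjoint (swap p q) (swap r s) := by
  intro x
  by_cases hxr : x = r
  · subst hxr
    exact Or.inl (swap_apply_of_ne_of_ne (fun h => hpr h.symm) (fun h => hqr h.symm))
  · by_cases hxs : x = s
    · subst hxs
      exact Or.inl (swap_apply_of_ne_of_ne (fun h => hps h.symm) (fun h => hqs h.symm))
    · exact Or.inr (swap_apply_of_ne_of_ne hxr hxs)

lemma dt_app1 {p q r s : Fin n} (hpr : p ≠ r) (hps : p ≠ s) : (swap p q * swap r s) p = q := by
  rw [Perm.mul_apply, swap_apply_of_ne_of_ne hpr hps, swap_apply_left]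

lemma dt_app2 {p q r s : Fin n} (hqr : q ≠ r) (hqs : q ≠ s) : (swap p q * swap r s) q = p := by
  rw [Perm.mul_apply, swap_apply_of_ne_of_ne hqr hqs, swap_apply_right]

lemma dt_app3 {p q r s : Fin n} (hsp : s ≠ p) (hsq : s ≠ q) : (swap p q * swap r s) r = s := by
  rw [Perm.mul_apply, swap_apply_left, swap_apply_of_ne_of_ne hsp hsq]

lemma dt_app4 {p q r s : Fin n} (hrp : r ≠ p) (hrq : r ≠ q) : (swap p q * swap r s) s = r := by
  rw [Perm.mul_apply, swap_apply_right, swap_apply_of_ne_of_ne hrp hrq]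

lemma dt_fix {p q r s x : Fin n} (h1 : x ≠ p) (h2 : x ≠ q) (h3 : x ≠ r) (h4 : x ≠ s) :
    (swap p q * swap r s) x = x := by
  rw [Perm.mul_apply, swap_apply_of_ne_of_ne h3 h4, swap_apply_of_ne_of_ne h1 h2]

lemma dt_sq {p q r s : Fin n} (hpr : p ≠ r) (hps : p ≠ s) (hqr : q ≠ r) (hqs : q ≠ s) :
    (swap p q * swap r s) * (swap p q * swap r s) = 1 := by
  have hcomm := (disjoint_swaps hpr hps hqr hqs).commute
  calc (swap p q * swap r s) * (swap p q * swap r s)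
      = swap p q * (swap r s * swap p q) * swap r s := by group
    _ = swap p q * (swap p q * swap r s) * swap r s := by rw [← hcomm.eq]
    _ = (swap p q * swap p q) * (swap r s * swap r s) := by group
    _ = 1 := by rw [swap_mul_self, swap_mul_self, one_mul]

lemma dt_mul_dt {a1 a2 a3 a4 : Fin n} (h12 : a1 ≠ a2) (h13 : a1 ≠ a3) (h14 : a1 ≠ a4)
    (h23 : a2 ≠ a3) (h24 : a2 ≠ a4) (h34 : a3 ≠ a4) :
    (swap a1 a2 * swap a3 a4) * (swap a1 a3 * swap a2 a4) = swap a1 a4 * swap a2 a3 := by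
  ext x
  rw [Perm.mul_apply]
  by_cases hx1 : x = a1
  · subst hx1
    rw [dt_app1 h12 h14, dt_app3 (Ne.symm h14) (Ne.symm h24), dt_app1 h12 h13]
  by_cases hx2 : x = a2
  · subst hx2
    rw [dt_app3 (Ne.symm h14) (Ne.symm h34), dt_app4 (Ne.symm h13) (Ne.symm h23),
      dt_app3 (Ne.symm h13) h34]
  by_cases hx3 : x = a3
  · subst hx3
    rw [dt_app2 (Ne.symm h23) h34, dt_app1 h13 h14, dt_app4 (Ne.symm h12) h24]
  by_cases hx4 : x = a4
  · subst hx4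
    rw [dt_app4 (Ne.symm h12) h23, dt_app2 h23 h24, dt_app2 (Ne.symm h24) (Ne.symm h34)]
  · rw [dt_fix hx1 hx3 hx2 hx4, dt_fix hx1 hx2 hx3 hx4, dt_fix hx1 hx4 hx2 hx3]

lemma comm_apply {α : Type*} {g t : Equiv.Perm α} (h : Commute g t) (x : α) :
    g (t x) = t (g x) := by
  have := congrArg (fun f : Equiv.Perm α => f x) h.eq
  simpa [Perm.mul_apply] using this

lemma supp_card_inv {c g t t' : Gn n} (hcg : Commute c g) (h : c * t * c⁻¹ = t') :
    (t' * g).support.card = (t * g).support.card := by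
  have hg : c * g * c⁻¹ = g := by
    rw [hcg.eq, mul_inv_cancel_right]
  have key : c * (t * g) * c⁻¹ = t' * g := by
    have h2 : c * (t * g) * c⁻¹ = (c * t * c⁻¹) * (c * g * c⁻¹) := by group
    rw [h2, h, hg]
  rw [← key, Equiv.Perm.support_conj, Finset.card_map]

lemma cycleType_dt {p q r s : Fin n} (hpq : p ≠ q) (hrs : r ≠ s)
    (hpr : p ≠ r) (hps : p ≠ s) (hqr : q ≠ r) (hqs : q ≠ s) :
    (swap p q * swap r s).cycleType = {2, 2} := by
  rw [(disjoint_swaps hpr hps hqr hqs).cycleType_mul]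
  rw [(isCycle_swap hpq).cycleType, (isCycle_swap hrs).cycleType,
    card_support_swap hpq, card_support_swap hrs]
  rfl

lemma sign_dt {p q r s : Fin n} (hpq : p ≠ q) (hrs : r ≠ s) :
    (swap p q * swap r s) ∈ alternatingGroup (Fin n) := by
  simp [Equiv.Perm.mem_alternatingGroup, Equiv.Perm.sign_swap hpq, Equiv.Perm.sign_swap hrs]

/-- any two double transpositions are conjugate by an element of the alternating group -/
lemma dt_conj_alt {p q r s p' q' r' s' : Fin n}
    (hpq : p ≠ q) (hrs : r ≠ s) (hpr : p ≠ r) (hps : p ≠ s) (hqr : q ≠ r) (hqs : q ≠ s)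
    (hpq' : p' ≠ q') (hrs' : r' ≠ s') (hpr' : p' ≠ r') (hps' : p' ≠ s')
    (hqr' : q' ≠ r') (hqs' : q' ≠ s') :
    ∃ h ∈ alternatingGroup (Fin n),
      h * (swap p q * swap r s) * h⁻¹ = swap p' q' * swap r' s' := by
  have hconj : IsConj (swap p q * swap r s) (swap p' q' * swap r' s') :=
    isConj_of_cycleType_eq (by
      rw [cycleType_dt hpq hrs hpr hps hqr hqs, cycleType_dt hpq' hrs' hpr' hps' hqr' hqs'])
  obtain ⟨c, hc⟩ := isConj_iff.mp hconj
  rcases Int.units_eq_one_or (Equiv.Perm.sign c) with hs | hs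
  · exact ⟨c, Equiv.Perm.mem_alternatingGroup.mpr hs, hc⟩
  · refine ⟨c * swap p q, ?_, ?_⟩
    · simp [Equiv.Perm.mem_alternatingGroup, Equiv.Perm.sign_swap hpq, hs]
    · have hsw : swap p q * (swap p q * swap r s) * (swap p q)⁻¹ = swap p q * swap r s := by
        rw [Equiv.swap_inv]
        calc swap p q * (swap p q * swap r s) * swap p q
            = (swap p q * swap p q) * (swap r s * swap p q) := by group
          _ = swap r s * swap p q := by rw [Equiv.swap_mul_self, one_mul]
          _ = swap p q * swap r s := ((disjoint_swaps hpr hps hqr hqs).commute.eq).symm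
      rw [mul_inv_rev, show c * swap p q * (swap p q * swap r s) * ((swap p q)⁻¹ * c⁻¹)
          = c * (swap p q * (swap p q * swap r s) * (swap p q)⁻¹) * c⁻¹ by group, hsw, hc]

section Klein
variable {G : Type*} [Group G]

lemma pgroup_zpowers_of_sq {d : G} (hd : d * d = 1) : IsPGroup 2 (Subgroup.zpowers d) := by
  intro g
  refine ⟨1, ?_⟩
  obtain ⟨k, hk⟩ := g.2
  apply Subtype.ext
  have h2 : d ^ (2:ℤ) = 1 := by
    rw [show (2:ℤ) = 1 + 1 by norm_num, zpow_add, zpow_one, hd]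
  have : (g : G) ^ 2 = 1 := by
    rw [← hk]
    show (d ^ k) ^ 2 = 1
    rw [← zpow_natCast, ← zpow_mul, mul_comm, zpow_mul]; norm_cast; rw [pow_two, hd, one_zpow]
  simpa using this

lemma klein_comm {d d' : G} (hcomm : Commute d d') :
    ∀ x ∈ Subgroup.closure {d, d'}, ∀ y ∈ Subgroup.closure {d, d'}, Commute x y := by
  have hgen : ∀ a ∈ ({d, d'} : Set G), ∀ b ∈ ({d, d'} : Set G), Commute a b := by
    rintro a (rfl | ha) b (rfl | hb)
    · exact Commute.refl _
    · simp only [Set.mem_singleton_iff] at hb; subst hb; exact hcomm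
    · simp only [Set.mem_singleton_iff] at ha; subst ha; exact hcomm.symm
    · simp only [Set.mem_singleton_iff] at ha hb; subst ha; subst hb; exact Commute.refl _
  intro x hx
  induction hx using Subgroup.closure_induction with
  | mem a ha =>
      intro y hy
      induction hy using Subgroup.closure_induction with
      | mem b hb => exact hgen a ha b hb
      | one => exact Commute.one_right _
      | mul u v _ _ hu hv => exact Commute.mul_right hu hv
      | inv u _ hu => exact Commute.inv_right hu
  | one => intro y _; exact Commute.one_left _
  | mul u v _ _ hu hv => intro y hy; exact Commute.mul_left (hu y hy) (hv y hy)
  | inv u _ hu => intro y hy; exact Commute.inv_left (hu y hy)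

lemma sq_of_mem_klein {d d' : G} (hd : d * d = 1) (hd' : d' * d' = 1)
    (hcomm : Commute d d') {x : G} (hx : x ∈ Subgroup.closure {d, d'}) : x * x = 1 := by
  induction hx using Subgroup.closure_induction with
  | mem a ha =>
      rcases ha with rfl | ha
      · exact hd
      · simp only [Set.mem_singleton_iff] at ha; subst ha; exact hd'
  | one => simp
  | mul u v hum hvm hu hv =>
      have huv : Commute u v := klein_comm hcomm u hum v hvm
      calc u * v * (u * v) = u * (v * u) * v := by group
        _ = u * (u * v) * v := by rw [huv.eq]
        _ = (u * u) * (v * v) := by group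
        _ = 1 := by rw [hu, hv, one_mul]
  | inv u hum hu => rw [← mul_inv_rev, hu, inv_one]

lemma pgroup_closure_klein {d d' : G} (hd : d * d = 1) (hd' : d' * d' = 1)
    (hcomm : Commute d d') : IsPGroup 2 (Subgroup.closure {d, d'}) := by
  intro g
  refine ⟨1, ?_⟩
  apply Subtype.ext
  have := sq_of_mem_klein hd hd' hcomm g.2
  have h2 : (g : G) ^ 2 = 1 := by rw [pow_two]; exact this
  simpa using h2

end Klein

lemma T_max (S : Sylow 2 (Gn n)) (Q : Subgroup (Gn n)) (hQp : IsPGroup 2 Q)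
    (hQH : Q ≤ alternatingGroup (Fin n))
    (hTQ : (S : Subgroup (Gn n)) ⊓ alternatingGroup (Fin n) ≤ Q) :
    Q = (S : Subgroup (Gn n)) ⊓ alternatingGroup (Fin n) := by
  obtain ⟨R, hQR⟩ := hQp.exists_le_sylow
  obtain ⟨x, hx⟩ := MulAction.exists_smul_eq (Gn n) S R
  have hR : (R : Subgroup (Gn n)) = MulAut.conj x • (S : Subgroup (Gn n)) := by
    rw [← hx]; exact Sylow.coe_subgroup_smul
  have hinf : (R : Subgroup (Gn n)) ⊓ alternatingGroup (Fin n)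
      = MulAut.conj x • ((S : Subgroup (Gn n)) ⊓ alternatingGroup (Fin n)) := by
    rw [Subgroup.smul_inf, ← hR, Subgroup.Normal.conj_smul_eq_self x (alternatingGroup (Fin n))]
  have hcard : Nat.card ((R : Subgroup (Gn n)) ⊓ alternatingGroup (Fin n) : Subgroup (Gn n))
      = Nat.card ((S : Subgroup (Gn n)) ⊓ alternatingGroup (Fin n) : Subgroup (Gn n)) := by
    rw [hinf]
    exact (Nat.card_congr (Subgroup.equivSMul (MulAut.conj x) _).toEquiv).symm
  have hQle : Q ≤ (R : Subgroup (Gn n)) ⊓ alternatingGroup (Fin n) := le_inf hQR hQH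
  refine (Subgroup.eq_of_le_of_card_ge hTQ ?_).symm
  calc Nat.card Q ≤ Nat.card ((R : Subgroup (Gn n)) ⊓ alternatingGroup (Fin n) : Subgroup (Gn n)) :=
        Subgroup.card_le_of_le hQle
    _ = _ := hcard

lemma conj_into_T (S : Sylow 2 (Gn n)) (K : Subgroup (Gn n))
    (hK : K ≤ alternatingGroup (Fin n))
    (hTK : (S : Subgroup (Gn n)) ⊓ alternatingGroup (Fin n) ≤ K)
    (Q : Subgroup (Gn n)) (hQK : Q ≤ K) (hQp : IsPGroup 2 Q) :
    ∃ κ ∈ K, ∀ q ∈ Q, κ * q * κ⁻¹ ∈ (S : Subgroup (Gn n)) ⊓ alternatingGroup (Fin n) := by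
  set T : Subgroup (Gn n) := (S : Subgroup (Gn n)) ⊓ alternatingGroup (Fin n) with hT
  have hTp : IsPGroup 2 T := S.isPGroup'.to_le inf_le_left
  have hT'p : IsPGroup 2 (T.subgroupOf K) := by
    have := hTp.comap_subtype (K := K)
    rwa [Subgroup.comap_subtype] at this
  have hmax : ∀ {Q' : Subgroup ↥K}, IsPGroup 2 Q' → T.subgroupOf K ≤ Q' →
      Q' = T.subgroupOf K := by
    intro Q' hQ'p hle
    have hmap : Q'.map K.subtype = T := by
      apply T_max S _ (hQ'p.map K.subtype) ((Subgroup.map_subtype_le Q').trans hK)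
      intro t ht
      exact ⟨⟨t, hTK ht⟩, hle (Subgroup.mem_subgroupOf.mpr ht), rfl⟩
    apply Subgroup.map_injective K.subtype_injective
    rw [hmap, Subgroup.subgroupOf_map_subtype, inf_of_le_left hTK]
  let T' : Sylow 2 ↥K := ⟨T.subgroupOf K, hT'p, fun hQ'p hle => hmax hQ'p hle⟩
  have hQ'p : IsPGroup 2 (Q.subgroupOf K) := by
    have := hQp.comap_subtype (K := K)
    rwa [Subgroup.comap_subtype] at this
  obtain ⟨P, hP⟩ := hQ'p.exists_le_sylow
  obtain ⟨x, hx⟩ := MulAction.exists_smul_eq ↥K P T'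
  refine ⟨(x : Gn n), x.2, fun q hq => ?_⟩
  have hq' : (⟨q, hQK hq⟩ : ↥K) ∈ P := hP (Subgroup.mem_subgroupOf.mpr hq)
  have hmem : x * (⟨q, hQK hq⟩ : ↥K) * x⁻¹ ∈ (T' : Subgroup ↥K) := by
    rw [← hx, Sylow.coe_subgroup_smul]
    exact Subgroup.smul_mem_pointwise_smul _ _ _ hq'
  have := Subgroup.mem_subgroupOf.mp hmem
  simpa using this

lemma caseM4 (g : Gn n) (p1 p2 p3 p4 : Fin n)
    (h12 : p1 ≠ p2) (h13 : p1 ≠ p3) (h14 : p1 ≠ p4)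
    (h23 : p2 ≠ p3) (h24 : p2 ≠ p4) (h34 : p3 ≠ p4)
    (hB3 : p3 ∈ g.support)
    (hcomm : Commute g (swap p1 p2 * swap p3 p4))
    (hg1 : g p1 = p2)
    (hc : ∃ c : Gn n, Commute c g ∧
      c * (swap p1 p2 * swap p3 p4) * c⁻¹ = swap p1 p3 * swap p2 p4) : False := by
  set t : Gn n := swap p1 p2 * swap p3 p4 with ht
  set t' : Gn n := swap p1 p3 * swap p2 p4 with ht'
  -- values of g on the four points
  have hg2 : g p2 = p1 := by
    have := comm_apply hcomm p1
    rw [dt_app1 h13 h14, hg1, dt_app2 h23 h24] at this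
    exact this
  have hg3 : g p3 = p4 := by
    have hkey := comm_apply hcomm p3
    rw [dt_app3 (Ne.symm h14) (Ne.symm h24)] at hkey
    -- hkey : g p4 = t (g p3)
    by_contra hne
    have hu1 : g p3 ≠ p1 := fun h => h23 (g.injective (h.trans hg2.symm)).symm
    have hu2 : g p3 ≠ p2 := fun h => h13 (g.injective (h.trans hg1.symm)).symm
    have hu3 : g p3 ≠ p3 := Equiv.Perm.mem_support.mp hB3
    -- then g p3 = p4 or fixed by t
    by_cases hu4 : g p3 = p4
    · exact hne hu4
    · rw [dt_fix hu1 hu2 hu3 hu4] at hkey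
      exact h34 (g.injective hkey.symm)
  have hg4 : g p4 = p3 := by
    have hthis := comm_apply hcomm p4
    rw [dt_app4 (Ne.symm h13) (Ne.symm h23), hg3] at hthis
    -- hthis : p4 = t (g p4)
    have h5 : t (g p4) = t p3 := by
      rw [ht, dt_app3 (Ne.symm h14) (Ne.symm h24)]
      exact hthis.symm
    exact t.injective h5
  -- supports
  have hgB : ∀ x : Fin n, x ≠ p1 → x ≠ p2 → x ≠ p3 → x ≠ p4 →
      g x ≠ p1 ∧ g x ≠ p2 ∧ g x ≠ p3 ∧ g x ≠ p4 := by
    intro x hx1 hx2 hx3 hx4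
    refine ⟨fun h => hx2 (g.injective (h.trans hg2.symm)),
      fun h => hx1 (g.injective (h.trans hg1.symm)),
      fun h => hx4 (g.injective (h.trans hg4.symm)),
      fun h => hx3 (g.injective (h.trans hg3.symm))⟩
  have hsupp1 : (t * g).support = g.support \ {p1, p2, p3, p4} := by
    ext x
    rw [Equiv.Perm.mem_support, Finset.mem_sdiff, Equiv.Perm.mem_support, Perm.mul_apply]
    by_cases hx1 : x = p1
    · subst hx1
      rw [hg1, dt_app2 h23 h24]
      simp
    by_cases hx2 : x = p2
    · subst hx2
      rw [hg2, dt_app1 h13 h14]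
      simp
    by_cases hx3 : x = p3
    · subst hx3
      rw [hg3, dt_app4 (Ne.symm h13) (Ne.symm h23)]
      simp
    by_cases hx4 : x = p4
    · subst hx4
      rw [hg4, dt_app3 (Ne.symm h14) (Ne.symm h24)]
      simp
    · by_cases hxs : g x = x
      · rw [hxs, dt_fix hx1 hx2 hx3 hx4]
        simp [hxs]
      · obtain ⟨k1, k2, k3, k4⟩ := hgB x hx1 hx2 hx3 hx4
        rw [dt_fix k1 k2 k3 k4]
        simp [hxs, hx1, hx2, hx3, hx4]
  have hsupp2 : (t' * g).support = g.support := by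
    ext x
    rw [Equiv.Perm.mem_support, Equiv.Perm.mem_support, Perm.mul_apply]
    by_cases hx1 : x = p1
    · subst hx1
      rw [hg1, dt_app3 (Ne.symm h14) (Ne.symm h34)]
      simp [h12, h13, h14, h23, h24, h34, Ne.symm h12, Ne.symm h13, Ne.symm h14, Ne.symm h23, Ne.symm h24, Ne.symm h34]
    by_cases hx2 : x = p2
    · subst hx2
      rw [hg2, dt_app1 h12 h14]
      simp [h12, h13, h14, h23, h24, h34, Ne.symm h12, Ne.symm h13, Ne.symm h14, Ne.symm h23, Ne.symm h24, Ne.symm h34]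
    by_cases hx3 : x = p3
    · subst hx3
      rw [hg3, dt_app4 (Ne.symm h12) h23]
      simp [h12, h13, h14, h23, h24, h34, Ne.symm h12, Ne.symm h13, Ne.symm h14, Ne.symm h23, Ne.symm h24, Ne.symm h34]
    by_cases hx4 : x = p4
    · subst hx4
      rw [hg4, dt_app2 (Ne.symm h23) h34]
      simp [h12, h13, h14, h23, h24, h34, Ne.symm h12, Ne.symm h13, Ne.symm h14, Ne.symm h23, Ne.symm h24, Ne.symm h34]
    · by_cases hxs : g x = x
      · rw [hxs, dt_fix hx1 hx3 hx2 hx4]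
      · obtain ⟨k1, k2, k3, k4⟩ := hgB x hx1 hx2 hx3 hx4
        rw [dt_fix k1 k3 k2 k4]
  obtain ⟨c, hcg, hct⟩ := hc
  have hinv := supp_card_inv hcg hct
  rw [hsupp1, hsupp2] at hinv
  have hBsub : ({p1, p2, p3, p4} : Finset (Fin n)) ⊆ g.support := by
    intro x hx
    simp only [Finset.mem_insert, Finset.mem_singleton] at hx
    rcases hx with rfl | rfl | rfl | rfl
    · exact Equiv.Perm.mem_support.mpr (by rw [hg1]; exact Ne.symm h12)
    · exact Equiv.Perm.mem_support.mpr (by rw [hg2]; exact h12)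
    · exact hB3
    · exact Equiv.Perm.mem_support.mpr (by rw [hg4]; exact h34)
  have hBcard : ({p1, p2, p3, p4} : Finset (Fin n)).card = 4 := by
    rw [Finset.card_insert_of_notMem (by simp [h12, h13, h14]),
      Finset.card_insert_of_notMem (by simp [h23, h24]),
      Finset.card_insert_of_notMem (by simp [h34]), Finset.card_singleton]
  rw [Finset.card_sdiff_of_subset hBsub, hBcard] at hinv
  have hle := Finset.card_le_card hBsub
  rw [hBcard] at hle
  omega

lemma conj_dt (kk : Gn n) (u v w z : Fin n) :
    kk * (swap u v * swap w z) * kk⁻¹ = swap (kk u) (kk v) * swap (kk w) (kk z) := by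
  rw [swap_apply_apply, swap_apply_apply]
  group

/-- The centralizer `C_S(E)` in `S` of the fusion system `E = F_{S ⊓ H}(H)`. -/
def fusionCent {G : Type*} [Group G] (S H : Subgroup G) : Set G :=
  {g | g ∈ S ∧ g ∈ Subgroup.centralizer ((S ⊓ H : Subgroup G) : Set G) ∧
    ∀ P : Subgroup G, P ≤ S ⊓ H → ∀ h ∈ H, (∀ x ∈ P, h * x * h⁻¹ ∈ S ⊓ H) →
      ∃ c ∈ Subgroup.centralizer ({g} : Set G), ∀ q ∈ P, c * q * c⁻¹ = h * q * h⁻¹}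

/-- the subgroup of even permutations preserving the support of `g` -/
def stab (g : Gn n) : Subgroup (Gn n) where
  carrier := {σ | σ ∈ alternatingGroup (Fin n) ∧ ∀ x, σ x ∈ g.support ↔ x ∈ g.support}
  one_mem' := ⟨one_mem _, by simp⟩
  mul_mem' := by
    rintro a b ⟨ha1, ha2⟩ ⟨hb1, hb2⟩
    exact ⟨mul_mem ha1 hb1, fun x => by rw [Perm.mul_apply]; exact (ha2 _).trans (hb2 x)⟩
  inv_mem' := by
    rintro a ⟨ha1, ha2⟩
    refine ⟨inv_mem ha1, fun x => ?_⟩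
    have := ha2 (a⁻¹ x)
    rw [show a (a⁻¹ x) = x from a.apply_symm_apply x] at this
    exact this.symm

lemma mem_stab {g σ : Gn n} : σ ∈ stab g ↔
    σ ∈ alternatingGroup (Fin n) ∧ ∀ x, σ x ∈ g.support ↔ x ∈ g.support := Iff.rfl

lemma dt_mem_stab {g : Gn n} {p q r s : Fin n} (hpq : p ≠ q) (hrs : r ≠ s)
    (hpr : p ≠ r) (hps : p ≠ s) (hqr : q ≠ r) (hqs : q ≠ s)
    (hpqM : p ∈ g.support ↔ q ∈ g.support) (hrsM : r ∈ g.support ↔ s ∈ g.support) :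
    swap p q * swap r s ∈ stab g := by
  refine ⟨sign_dt hpq hrs, fun x => ?_⟩
  by_cases hx1 : x = p
  · subst hx1; rw [dt_app1 hpr hps]; exact hpqM.symm
  by_cases hx2 : x = q
  · subst hx2; rw [dt_app2 hqr hqs]; exact hpqM
  by_cases hx3 : x = r
  · subst hx3; rw [dt_app3 (Ne.symm hps) (Ne.symm hqs)]; exact hrsM.symm
  by_cases hx4 : x = s
  · subst hx4; rw [dt_app4 (Ne.symm hpr) (Ne.symm hqr)]; exact hrsM
  · rw [dt_fix hx1 hx2 hx3 hx4]

lemma fusionCent_eq_one (hn : 6 ≤ n) (S : Sylow 2 (Gn n)) (g : Gn n)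
    (hg : g ∈ fusionCent (S : Subgroup (Gn n)) (alternatingGroup (Fin n))) : g = 1 := by
  obtain ⟨hgS, hgC, hfus⟩ := hg
  by_contra hne
  have hcommT : ∀ t, t ∈ (S : Subgroup (Gn n)) ⊓ alternatingGroup (Fin n) → Commute g t :=
    fun t ht => (Subgroup.mem_centralizer_iff.mp hgC t ht).symm
  have hTK : (S : Subgroup (Gn n)) ⊓ alternatingGroup (Fin n) ≤ stab g := by
    intro t ht
    refine ⟨ht.2, fun x => ?_⟩
    have hcomm := hcommT t ht
    rw [Equiv.Perm.mem_support, Equiv.Perm.mem_support]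
    rw [← comm_apply hcomm.symm x]
    constructor
    · intro h1 h2
      apply h1
      rw [h2]
    · intro h1 h2
      exact h1 (t.injective h2)
  have hKH : stab g ≤ alternatingGroup (Fin n) := fun σ hσ => hσ.1
  -- fusion helper for double transpositions in T
  have fusq : ∀ (p q r s p' q' r' s' : Fin n),
      p ≠ q → r ≠ s → p ≠ r → p ≠ s → q ≠ r → q ≠ s →
      p' ≠ q' → r' ≠ s' → p' ≠ r' → p' ≠ s' → q' ≠ r' → q' ≠ s' →
      swap p q * swap r s ∈ (S : Subgroup (Gn n)) ⊓ alternatingGroup (Fin n) →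
      swap p' q' * swap r' s' ∈ (S : Subgroup (Gn n)) ⊓ alternatingGroup (Fin n) →
      ∃ c : Gn n, Commute c g ∧
        c * (swap p q * swap r s) * c⁻¹ = swap p' q' * swap r' s' := by
    intro p q r s p' q' r' s' h1 h2 h3 h4 h5 h6 h1' h2' h3' h4' h5' h6' htT ht'T
    obtain ⟨h, hH, hconj⟩ := dt_conj_alt h1 h2 h3 h4 h5 h6 h1' h2' h3' h4' h5' h6'
    obtain ⟨c, hcC, hcq⟩ := hfus (Subgroup.zpowers (swap p q * swap r s))
      (Subgroup.zpowers_le.mpr htT) h hH (by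
        intro x hx
        obtain ⟨k, hk⟩ := Subgroup.mem_zpowers_iff.mp hx
        rw [← hk, ← conj_zpow, hconj]
        exact Subgroup.zpow_mem _ ht'T k)
    refine ⟨c, Subgroup.mem_centralizer_singleton_iff.mp hcC, ?_⟩
    rw [hcq _ (Subgroup.mem_zpowers _), hconj]
  -- the support of g
  have hM2 : 2 ≤ g.support.card := Equiv.Perm.one_lt_card_support_of_ne_one hne
  rcases Nat.lt_or_ge g.support.card 4 with h4 | h4
  · have : g.support.card = 2 ∨ g.support.card = 3 := by omega
    rcases this with hm | hm
    · -- case m = 2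
      obtain ⟨x, y, hxy, hg_eq⟩ := Equiv.Perm.card_support_eq_two.mp hm
      have hMxy : g.support = {x, y} := by rw [hg_eq]; exact Equiv.Perm.support_swap hxy
      have hout : 4 ≤ (Finset.univ \ g.support).card := by
        rw [Finset.card_sdiff_of_subset (Finset.subset_univ _), Finset.card_univ, Fintype.card_fin, hm]
        omega
      obtain ⟨f1, hf1, f2, hf2, f3, hf3, f4, hf4, hf12, hf13, hf14, hf23, hf24, hf34⟩ :=
        four_of_card _ hout
      have hfM : ∀ i, i ∈ (Finset.univ \ g.support) → i ∉ g.support :=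
        fun i hi => (Finset.mem_sdiff.mp hi).2
      have hf1M := hfM _ hf1
      have hf2M := hfM _ hf2
      have hf3M := hfM _ hf3
      have hf4M := hfM _ hf4
      have hxM : x ∈ g.support := by rw [hMxy]; simp
      have hyM : y ∈ g.support := by rw [hMxy]; simp
      have hxf : ∀ i, i ∉ g.support → x ≠ i := fun i hi h => hi (h ▸ hxM)
      have hyf : ∀ i, i ∉ g.support → y ≠ i := fun i hi h => hi (h ▸ hyM)
      have hdK : swap x y * swap f1 f2 ∈ stab g :=
        dt_mem_stab hxy hf12 (hxf _ hf1M) (hxf _ hf2M) (hyf _ hf1M) (hyf _ hf2M)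
          (iff_of_true hxM hyM) (iff_of_false hf1M hf2M)
      have hd'K : swap f1 f2 * swap f3 f4 ∈ stab g :=
        dt_mem_stab hf12 hf34 hf13 hf14 hf23 hf24
          (iff_of_false hf1M hf2M) (iff_of_false hf3M hf4M)
      obtain ⟨κ, hκK, hκ⟩ := conj_into_T S (stab g) hKH hTK _
        (Subgroup.zpowers_le.mpr hdK)
        (pgroup_zpowers_of_sq (dt_sq (hxf _ hf1M) (hxf _ hf2M) (hyf _ hf1M) (hyf _ hf2M)))
      obtain ⟨κ', hκ'K, hκ'⟩ := conj_into_T S (stab g) hKH hTK _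
        (Subgroup.zpowers_le.mpr hd'K)
        (pgroup_zpowers_of_sq (dt_sq hf13 hf14 hf23 hf24))
      have htT0 : swap (κ x) (κ y) * swap (κ f1) (κ f2) ∈
          (S : Subgroup (Gn n)) ⊓ alternatingGroup (Fin n) := by
        rw [← conj_dt]
        exact hκ _ (Subgroup.mem_zpowers _)
      have ht'T : swap (κ' f1) (κ' f2) * swap (κ' f3) (κ' f4) ∈
          (S : Subgroup (Gn n)) ⊓ alternatingGroup (Fin n) := by
        rw [← conj_dt]
        exact hκ' _ (Subgroup.mem_zpowers _)
      -- κ fixes {x, y} as a set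
      have hκx : κ x ∈ ({x, y} : Finset (Fin n)) := by
        rw [← hMxy]; exact (hκK.2 x).mpr hxM
      have hκy : κ y ∈ ({x, y} : Finset (Fin n)) := by
        rw [← hMxy]; exact (hκK.2 y).mpr hyM
      have hswκ : swap (κ x) (κ y) = swap x y := by
        simp only [Finset.mem_insert, Finset.mem_singleton] at hκx hκy
        rcases hκx with h1 | h1 <;> rcases hκy with h2 | h2
        · exact absurd (κ.injective (h1.trans h2.symm)) hxy
        · rw [h1, h2]
        · rw [h1, h2, swap_comm]
        · exact absurd (κ.injective (h1.trans h2.symm)) hxy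
      rw [hswκ] at htT0
      have heM1 : κ f1 ∉ g.support := fun h => hf1M ((hκK.2 f1).mp h)
      have heM2 : κ f2 ∉ g.support := fun h => hf2M ((hκK.2 f2).mp h)
      have he'M1 : κ' f1 ∉ g.support := fun h => hf1M ((hκ'K.2 f1).mp h)
      have he'M2 : κ' f2 ∉ g.support := fun h => hf2M ((hκ'K.2 f2).mp h)
      have he'M3 : κ' f3 ∉ g.support := fun h => hf3M ((hκ'K.2 f3).mp h)
      have he'M4 : κ' f4 ∉ g.support := fun h => hf4M ((hκ'K.2 f4).mp h)
      have he12 : κ f1 ≠ κ f2 := fun h => hf12 (κ.injective h)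
      have he'12 : κ' f1 ≠ κ' f2 := fun h => hf12 (κ'.injective h)
      have he'13 : κ' f1 ≠ κ' f3 := fun h => hf13 (κ'.injective h)
      have he'14 : κ' f1 ≠ κ' f4 := fun h => hf14 (κ'.injective h)
      have he'23 : κ' f2 ≠ κ' f3 := fun h => hf23 (κ'.injective h)
      have he'24 : κ' f2 ≠ κ' f4 := fun h => hf24 (κ'.injective h)
      have he'34 : κ' f3 ≠ κ' f4 := fun h => hf34 (κ'.injective h)
      obtain ⟨c, hcg, hct⟩ := fusq x y (κ f1) (κ f2) (κ' f1) (κ' f2) (κ' f3) (κ' f4)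
        hxy he12 (hxf _ heM1) (hxf _ heM2) (hyf _ heM1) (hyf _ heM2)
        he'12 he'34 he'13 he'14 he'23 he'24 htT0 ht'T
      have hinv := supp_card_inv hcg hct
      -- (t * g) = swap (κ f1) (κ f2)
      have htg : (swap x y * swap (κ f1) (κ f2)) * g = swap (κ f1) (κ f2) := by
        rw [hg_eq, (disjoint_swaps (hxf _ heM1) (hxf _ heM2) (hyf _ heM1)
          (hyf _ heM2)).commute.eq, mul_assoc, swap_mul_self, mul_one]
      -- disjointness for t' * g
      have hdisj1 : Perm.Disjoint (swap (κ' f3) (κ' f4)) (swap x y) :=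
        disjoint_swaps (Ne.symm (hxf _ he'M3)) (Ne.symm (hyf _ he'M3))
          (Ne.symm (hxf _ he'M4)) (Ne.symm (hyf _ he'M4))
      have hdisj2 : Perm.Disjoint (swap (κ' f1) (κ' f2)) (swap (κ' f3) (κ' f4) * swap x y) :=
        Equiv.Perm.Disjoint.mul_right
          (disjoint_swaps he'13 he'14 he'23 he'24)
          (disjoint_swaps (Ne.symm (hxf _ he'M1)) (Ne.symm (hyf _ he'M1))
            (Ne.symm (hxf _ he'M2)) (Ne.symm (hyf _ he'M2)))
      have ht'g : (swap (κ' f1) (κ' f2) * swap (κ' f3) (κ' f4)) * g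
          = swap (κ' f1) (κ' f2) * (swap (κ' f3) (κ' f4) * swap x y) := by
        rw [hg_eq, mul_assoc]
      rw [htg, ht'g] at hinv
      rw [hdisj2.support_mul, hdisj1.support_mul, Equiv.Perm.card_support_swap he12,
        Equiv.Perm.support_swap he'12, Equiv.Perm.support_swap he'34,
        Equiv.Perm.support_swap hxy] at hinv
      have hsub3 : ({κ' f1, κ' f2, x} : Finset (Fin n)) ⊆
          ({κ' f1, κ' f2} ∪ ({κ' f3, κ' f4} ∪ {x, y}) : Finset (Fin n)) := by
        intro a ha
        simp only [Finset.mem_insert, Finset.mem_singleton] at ha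
        rcases ha with rfl | rfl | rfl <;> simp
      have hc3 : ({κ' f1, κ' f2, x} : Finset (Fin n)).card = 3 := by
        rw [Finset.card_insert_of_notMem (by simp [he'12, Ne.symm (hxf _ he'M1)]),
          Finset.card_insert_of_notMem (by simp [Ne.symm (hxf _ he'M2)]),
          Finset.card_singleton]
      have := Finset.card_le_card hsub3
      rw [hc3, hinv] at this
      omega
    · -- case m = 3
      obtain ⟨x1, x2, x3, hx12, hx13, hx23, hMeq⟩ := Finset.card_eq_three.mp hm
      have hout : 2 ≤ (Finset.univ \ g.support).card := by
        rw [Finset.card_sdiff_of_subset (Finset.subset_univ _), Finset.card_univ, Fintype.card_fin, hm]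
        omega
      obtain ⟨f1, hf1, f2, hf2, hf12⟩ := two_of_card _ hout
      have hf1M : f1 ∉ g.support := (Finset.mem_sdiff.mp hf1).2
      have hf2M : f2 ∉ g.support := (Finset.mem_sdiff.mp hf2).2
      have hx1M : x1 ∈ g.support := by rw [hMeq]; simp
      have hx2M : x2 ∈ g.support := by rw [hMeq]; simp
      have hx3M : x3 ∈ g.support := by rw [hMeq]; simp
      have hx1f1 : x1 ≠ f1 := fun h => hf1M (h ▸ hx1M)
      have hx1f2 : x1 ≠ f2 := fun h => hf2M (h ▸ hx1M)
      have hx2f1 : x2 ≠ f1 := fun h => hf1M (h ▸ hx2M)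
      have hx2f2 : x2 ≠ f2 := fun h => hf2M (h ▸ hx2M)
      have hx3f1 : x3 ≠ f1 := fun h => hf1M (h ▸ hx3M)
      have hx3f2 : x3 ≠ f2 := fun h => hf2M (h ▸ hx3M)
      have hdK : swap x1 x2 * swap f1 f2 ∈ stab g :=
        dt_mem_stab hx12 hf12 hx1f1 hx1f2 hx2f1 hx2f2
          (iff_of_true hx1M hx2M) (iff_of_false hf1M hf2M)
      obtain ⟨κ, hκK, hκ⟩ := conj_into_T S (stab g) hKH hTK _
        (Subgroup.zpowers_le.mpr hdK)
        (pgroup_zpowers_of_sq (dt_sq hx1f1 hx1f2 hx2f1 hx2f2))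
      have htT : swap (κ x1) (κ x2) * swap (κ f1) (κ f2) ∈
          (S : Subgroup (Gn n)) ⊓ alternatingGroup (Fin n) := by
        rw [← conj_dt]
        exact hκ _ (Subgroup.mem_zpowers _)
      have hb12 : κ x1 ≠ κ x2 := fun h => hx12 (κ.injective h)
      have hb13 : κ x1 ≠ κ x3 := fun h => hx13 (κ.injective h)
      have hb23 : κ x2 ≠ κ x3 := fun h => hx23 (κ.injective h)
      have hbe : ∀ i j : Fin n, i ∈ g.support → j ∉ g.support → κ i ≠ κ j := by
        intro i j hi hj h
        exact hj ((κ.injective h) ▸ hi)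
      have hbM1 : κ x1 ∈ g.support := (hκK.2 x1).mpr hx1M
      have hbM2 : κ x2 ∈ g.support := (hκK.2 x2).mpr hx2M
      have hbM3 : κ x3 ∈ g.support := (hκK.2 x3).mpr hx3M
      have heM1 : κ f1 ∉ g.support := fun h => hf1M ((hκK.2 f1).mp h)
      have heM2 : κ f2 ∉ g.support := fun h => hf2M ((hκK.2 f2).mp h)
      have hb1e1 : κ x1 ≠ κ f1 := hbe _ _ hx1M hf1M
      have hb1e2 : κ x1 ≠ κ f2 := hbe _ _ hx1M hf2M
      have hb2e1 : κ x2 ≠ κ f1 := hbe _ _ hx2M hf1M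
      have hb2e2 : κ x2 ≠ κ f2 := hbe _ _ hx2M hf2M
      have hb3e1 : κ x3 ≠ κ f1 := hbe _ _ hx3M hf1M
      have hb3e2 : κ x3 ≠ κ f2 := hbe _ _ hx3M hf2M
      have hcomm := hcommT _ htT
      have hMeq' : g.support = {κ x1, κ x2, κ x3} := by
        refine (Finset.eq_of_subset_of_card_le ?_ ?_).symm
        · intro z hz
          simp only [Finset.mem_insert, Finset.mem_singleton] at hz
          rcases hz with rfl | rfl | rfl
          · exact hbM1
          · exact hbM2
          · exact hbM3
        · rw [hm, Finset.card_insert_of_notMem (by simp [hb12, hb13]),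
            Finset.card_insert_of_notMem (by simp [hb23]), Finset.card_singleton]
      have hu := comm_apply hcomm (κ x1)
      rw [dt_app1 hb1e1 hb1e2] at hu
      have hu1 : g (κ x1) ≠ κ x1 := Equiv.Perm.mem_support.mp hbM1
      by_cases hgb : g (κ x1) = κ x2
      · rw [hgb, dt_app2 hb2e1 hb2e2] at hu
        have h3s : g (κ x3) ∈ g.support := Equiv.Perm.apply_mem_support.mpr hbM3
        rw [hMeq'] at h3s
        simp only [Finset.mem_insert, Finset.mem_singleton] at h3s
        rcases h3s with h3 | h3 | h3
        · exact hb23 (g.injective (h3.trans hu.symm)).symm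
        · exact hb13 (g.injective (h3.trans hgb.symm)).symm
        · exact Equiv.Perm.mem_support.mp hbM3 h3
      · have h1s : g (κ x1) ∈ g.support := Equiv.Perm.apply_mem_support.mpr hbM1
        rw [hMeq'] at h1s
        simp only [Finset.mem_insert, Finset.mem_singleton] at h1s
        rcases h1s with h1 | h1 | h1
        · exact hu1 h1
        · exact hgb h1
        · rw [h1, dt_fix (Ne.symm hb13) (Ne.symm hb23) hb3e1 hb3e2] at hu
          exact hb12 (g.injective (hu.trans h1.symm)).symm
  · -- case m >= 4
    obtain ⟨a1, ha1, a2, ha2, a3, ha3, a4, ha4, h12, h13, h14, h23, h24, h34⟩ :=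
      four_of_card g.support h4
    have hdK : swap a1 a2 * swap a3 a4 ∈ stab g :=
      dt_mem_stab h12 h34 h13 h14 h23 h24 (iff_of_true ha1 ha2) (iff_of_true ha3 ha4)
    have hd'K : swap a1 a3 * swap a2 a4 ∈ stab g :=
      dt_mem_stab h13 h24 h12 h14 (Ne.symm h23) h34 (iff_of_true ha1 ha3) (iff_of_true ha2 ha4)
    have hdsq : (swap a1 a2 * swap a3 a4) * (swap a1 a2 * swap a3 a4) = 1 :=
      dt_sq h13 h14 h23 h24
    have hd'sq : (swap a1 a3 * swap a2 a4) * (swap a1 a3 * swap a2 a4) = 1 :=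
      dt_sq h12 h14 (Ne.symm h23) h34
    have e1 := dt_mul_dt h12 h13 h14 h23 h24 h34
    have e2 := dt_mul_dt h13 h12 h14 (Ne.symm h23) h34 h24
    have hddcomm : Commute (swap a1 a2 * swap a3 a4) (swap a1 a3 * swap a2 a4) := by
      show _ = _
      rw [e1, e2, swap_comm a3 a2]
    have hVK : Subgroup.closure {swap a1 a2 * swap a3 a4, swap a1 a3 * swap a2 a4} ≤ stab g :=
      (Subgroup.closure_le _).mpr (by
        rintro z (rfl | hz)
        · exact hdK
        · simp only [Set.mem_singleton_iff] at hz; subst hz; exact hd'K)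
    obtain ⟨κ, hκK, hκ⟩ := conj_into_T S (stab g) hKH hTK _ hVK
      (pgroup_closure_klein hdsq hd'sq hddcomm)
    have hκconj : ∀ u v w z : Fin n, κ * (swap u v * swap w z) * κ⁻¹ =
        swap (κ u) (κ v) * swap (κ w) (κ z) := by
      intro u v w z
      rw [swap_apply_apply, swap_apply_apply]
      group
    have hb12 : κ a1 ≠ κ a2 := fun h => h12 (κ.injective h)
    have hb13 : κ a1 ≠ κ a3 := fun h => h13 (κ.injective h)
    have hb14 : κ a1 ≠ κ a4 := fun h => h14 (κ.injective h)
    have hb23 : κ a2 ≠ κ a3 := fun h => h23 (κ.injective h)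
    have hb24 : κ a2 ≠ κ a4 := fun h => h24 (κ.injective h)
    have hb34 : κ a3 ≠ κ a4 := fun h => h34 (κ.injective h)
    have hbM1 : κ a1 ∈ g.support := (hκK.2 a1).mpr ha1
    have hbM2 : κ a2 ∈ g.support := (hκK.2 a2).mpr ha2
    have hbM3 : κ a3 ∈ g.support := (hκK.2 a3).mpr ha3
    have hbM4 : κ a4 ∈ g.support := (hκK.2 a4).mpr ha4
    have htT : swap (κ a1) (κ a2) * swap (κ a3) (κ a4) ∈
        (S : Subgroup (Gn n)) ⊓ alternatingGroup (Fin n) := by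
      rw [← hκconj]
      exact hκ _ (Subgroup.subset_closure (by simp))
    have ht'T : swap (κ a1) (κ a3) * swap (κ a2) (κ a4) ∈
        (S : Subgroup (Gn n)) ⊓ alternatingGroup (Fin n) := by
      rw [← hκconj]
      exact hκ _ (Subgroup.subset_closure (by simp))
    have ht''T : swap (κ a1) (κ a4) * swap (κ a2) (κ a3) ∈
        (S : Subgroup (Gn n)) ⊓ alternatingGroup (Fin n) := by
      rw [← hκconj, ← e1]
      exact hκ _ (mul_mem (Subgroup.subset_closure (by simp))
        (Subgroup.subset_closure (by simp)))
    have hct := hcommT _ htT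
    have hgb1 : g (κ a1) = κ a2 ∨ g (κ a1) = κ a3 ∨ g (κ a1) = κ a4 := by
      by_contra hcon
      push_neg at hcon
      obtain ⟨hc2, hc3, hc4⟩ := hcon
      have hu := comm_apply hct (κ a1)
      rw [dt_app1 hb13 hb14] at hu
      rw [dt_fix (Equiv.Perm.mem_support.mp hbM1) hc2 hc3 hc4] at hu
      exact hb12 (g.injective hu).symm
    rcases hgb1 with hgb | hgb | hgb
    · exact caseM4 g (κ a1) (κ a2) (κ a3) (κ a4) hb12 hb13 hb14 hb23 hb24 hb34 hbM3
        hct hgb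
        (fusq _ _ _ _ _ _ _ _ hb12 hb34 hb13 hb14 hb23 hb24
          hb13 hb24 hb12 hb14 (Ne.symm hb23) hb34 htT ht'T)
    · exact caseM4 g (κ a1) (κ a3) (κ a2) (κ a4) hb13 hb12 hb14 (Ne.symm hb23) hb34 hb24 hbM2
        (hcommT _ ht'T) hgb
        (fusq _ _ _ _ _ _ _ _ hb13 hb24 hb12 hb14 (Ne.symm hb23) hb34
          hb12 hb34 hb13 hb14 hb23 hb24 ht'T htT)
    · have htT2 : swap (κ a1) (κ a2) * swap (κ a4) (κ a3) ∈
          (S : Subgroup (Gn n)) ⊓ alternatingGroup (Fin n) := by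
        rw [swap_comm (κ a4) (κ a3)]
        exact htT
      exact caseM4 g (κ a1) (κ a4) (κ a2) (κ a3) hb14 hb12 hb13 (Ne.symm hb24) (Ne.symm hb34)
        hb23 hbM2 (hcommT _ ht''T) hgb
        (fusq _ _ _ _ _ _ _ _ hb14 hb23 hb12 hb13 (Ne.symm hb24) (Ne.symm hb34)
          hb12 (Ne.symm hb34) hb14 hb13 hb24 hb23 ht''T htT2)


/-- For `G = S_n`, `H = A_n` (`n ≥ 6`), `p = 2` and `S` a Sylow `2`-subgroup of `G`,
one has `C_S(E) = C_G(H) ∩ S`; in particular `C_S(E)` is trivial. -/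
theorem fusionCent_symm_alternating (n : ℕ) (hn : 6 ≤ n)
    (S : Sylow 2 (Equiv.Perm (Fin n))) :
    fusionCent (S : Subgroup (Equiv.Perm (Fin n))) (alternatingGroup (Fin n)) =
        ((Subgroup.centralizer ((alternatingGroup (Fin n) : Subgroup (Equiv.Perm (Fin n))) :
            Set (Equiv.Perm (Fin n))) ⊓ (S : Subgroup (Equiv.Perm (Fin n)))) :
          Set (Equiv.Perm (Fin n))) ∧
      fusionCent (S : Subgroup (Equiv.Perm (Fin n))) (alternatingGroup (Fin n)) =
        {(1 : Equiv.Perm (Fin n))} := by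
  have hbot : Subgroup.centralizer
      ((alternatingGroup (Fin n) : Subgroup (Equiv.Perm (Fin n))) : Set (Equiv.Perm (Fin n)))
      = ⊥ := by
    ext g
    simp only [Subgroup.mem_bot]
    constructor
    · intro hgc
      exact centralizer_alternating hn g
        (fun h hh => Subgroup.mem_centralizer_iff.mp hgc h hh)
    · rintro rfl
      exact one_mem _
  have hone : fusionCent (S : Subgroup (Equiv.Perm (Fin n))) (alternatingGroup (Fin n))
      = {(1 : Equiv.Perm (Fin n))} := by
    ext g
    simp only [Set.mem_singleton_iff]
    constructor
    · exact fusionCent_eq_one hn S g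
    · rintro rfl
      refine ⟨one_mem _, one_mem _, fun P hP h hH hcond => ⟨h, ?_, fun q _ => rfl⟩⟩
      exact Subgroup.mem_centralizer_singleton_iff.mpr (by group)
  refine ⟨?_, hone⟩
  rw [hone, hbot, Subgroup.coe_bot]
  show ({1} : Set (Equiv.Perm (Fin n))) = {1} ∩ ((S : Subgroup (Equiv.Perm (Fin n))) : Set (Equiv.Perm (Fin n)))
  exact (Set.inter_eq_left.mpr (Set.singleton_subset_iff.mpr (Subgroup.one_mem _))).symm
end
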